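/- For single-vertex trees decorated by a commutative monoid Ω, the deformed plugging at the root satisfies the binomial symmetry needed for the pre-Lie identity: for all n, k, k̄ ∈ ℕ^{d+1} and finite tuples ℓ ∈ (ℕ^{d+1})^n, ℓ̄ ∈ (ℕ^{d+1})^m, Σ_{ℓ,ℓ̄} C(n, ℓ̄)·C(n − |ℓ̄| + k̄, ℓ) − Σ_{ℓ,r,ℓ̄} C(n; ℓ̄, r)·C(k̄, ℓ) = Σ_{ℓ,ℓ̄} C(n, ℓ)·C(n − |ℓ| + k, ℓ̄) − Σ_{ℓ,ℓ̄,r̄} C(n; ℓ, r̄)·C(k, ℓ̄), where all binomial/multinomial coefficients are componentwise and |ℓ| = Σᵢ ℓᵢ. In particular, by Chu–Vandermonde, Σ_{ℓ,r} C(n − |ℓ̄|, r)·C(k̄, ℓ) = Σ_ℓ C(n − |ℓ̄| + k̄, ℓ). -/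

import Mathlib

/-- Multi-indices in `ℕ^{d+1}`. -/
abbrev Nd (d : ℕ) : Type := Fin (d + 1) → ℕ

/-- Componentwise binomial coefficient on `ℕ^{d+1}` (zero if some component exceeds). -/
def binom {d : ℕ} (n ℓ : Nd d) : ℕ := ∏ c, Nat.choose (n c) (ℓ c)

/-- Componentwise multinomial coefficient `C(k, ℓ₁, …, ℓ_n)` of a tuple of
multi-indices, as the iterated product of binomial coefficients
`∏ᵢ C(k − ℓ₁ − ⋯ − ℓ_{i−1}, ℓᵢ)`; it vanishes as soon as the subtractions leave `ℕ^{d+1}`. -/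
def ndMnom {d : ℕ} (k : Nd d) {n : ℕ} (L : Fin n → Nd d) : ℕ :=
  ∏ i : Fin n, binom (k - ∑ j ∈ Finset.univ.filter (· < i), L j) (L i)

open Finset

section Aux

variable {d : ℕ}

lemma binom_le {a b : Nd d} (h : binom a b ≠ 0) : b ≤ a := by
  intro c
  by_contra hc
  push_neg at hc
  exact h (Finset.prod_eq_zero (Finset.mem_univ c) (Nat.choose_eq_zero_of_lt hc))

lemma ndMnom_le {k : Nd d} {n : ℕ} {L : Fin n → Nd d} (h : ndMnom k L ≠ 0) (i : Fin n) :
    L i ≤ k := by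
  have h1 : binom (k - ∑ j ∈ Finset.univ.filter (· < i), L j) (L i) ≠ 0 := by
    intro h0
    exact h (Finset.prod_eq_zero (Finset.mem_univ i) h0)
  exact (binom_le h1).trans tsub_le_self

lemma ndMnom_cons (k l0 : Nd d) {n : ℕ} (L : Fin n → Nd d) :
    ndMnom k (Fin.cons l0 L) = binom k l0 * ndMnom (k - l0) L := by
  unfold ndMnom
  rw [Fin.prod_univ_succ]
  congr 1
  · have h0 : Finset.univ.filter (· < (0 : Fin (n+1))) = ∅ :=
      Finset.filter_false_of_mem (fun j _ => Fin.not_lt_zero j)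
    rw [h0, Finset.sum_empty, tsub_zero, Fin.cons_zero]
  · apply Finset.prod_congr rfl
    intro i _
    have hs : ∑ j ∈ Finset.univ.filter (· < i.succ), Fin.cons l0 L j
        = l0 + ∑ j ∈ Finset.univ.filter (· < i), L j := by
      rw [Finset.sum_filter, Finset.sum_filter, Fin.sum_univ_succ]
      congr 1
      · apply Finset.sum_congr rfl
        intro j _
        rw [Fin.cons_succ]
        congr 1
        simp [Fin.succ_lt_succ_iff]
    rw [hs, Fin.cons_succ, tsub_add_eq_tsub_tsub]

lemma ndMnom_append (k : Nd d) {m n : ℕ} (A : Fin m → Nd d) (B : Fin n → Nd d) :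
    ndMnom k (Fin.append A B) = ndMnom k A * ndMnom (k - ∑ i, A i) B := by
  unfold ndMnom
  rw [Fin.prod_univ_add]
  congr 1
  · apply Finset.prod_congr rfl
    intro i _
    rw [Fin.append_left]
    have hs : ∑ j ∈ Finset.univ.filter (· < Fin.castAdd n i), Fin.append A B j
        = ∑ j ∈ Finset.univ.filter (· < i), A j := by
      rw [Finset.sum_filter, Finset.sum_filter, Fin.sum_univ_add]
      have h2 : ∀ j : Fin n,
          (if Fin.natAdd m j < Fin.castAdd n i then Fin.append A B (Fin.natAdd m j) else 0)
            = 0 := by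
        intro j
        rw [if_neg]
        simp only [Fin.lt_def, Fin.coe_castAdd, Fin.coe_natAdd]
        omega
      rw [Finset.sum_congr rfl (fun j _ => h2 j), Finset.sum_const_zero, add_zero]
      apply Finset.sum_congr rfl
      intro j _
      simp only [Fin.append_left, Fin.lt_def, Fin.coe_castAdd]
    rw [hs]
  · apply Finset.prod_congr rfl
    intro i _
    rw [Fin.append_right]
    have hs : ∑ j ∈ Finset.univ.filter (· < Fin.natAdd m i), Fin.append A B j
        = (∑ j, A j) + ∑ j ∈ Finset.univ.filter (· < i), B j := by
      rw [Finset.sum_filter, Fin.sum_univ_add]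
      congr 1
      · apply Finset.sum_congr rfl
        intro j _
        rw [if_pos, Fin.append_left]
        simp only [Fin.lt_def, Fin.coe_castAdd, Fin.coe_natAdd]
        omega
      · rw [Finset.sum_filter]
        apply Finset.sum_congr rfl
        intro j _
        simp only [Fin.append_right, Fin.lt_def, Fin.coe_natAdd, add_lt_add_iff_left]
    rw [hs, tsub_add_eq_tsub_tsub]

/-- The box of multi-indices bounded by `K`. -/
def Box (K : Nd d) : Finset (Nd d) := Fintype.piFinset fun c => Finset.Iic (K c)

/-- The box of tuples of multi-indices bounded by `K`. -/
def TBox (n : ℕ) (K : Nd d) : Finset (Fin n → Nd d) := Fintype.piFinset fun _ => Box K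

lemma mem_Box {K l : Nd d} : l ∈ Box K ↔ l ≤ K := by
  simp [Box, Fintype.mem_piFinset, Pi.le_def]

lemma mem_TBox {n : ℕ} {K : Nd d} {L : Fin n → Nd d} : L ∈ TBox n K ↔ ∀ i, L i ≤ K := by
  simp [TBox, Fintype.mem_piFinset, mem_Box]

lemma finsum_eq_sum_TBox {M : Type*} [AddCommMonoid M] {n : ℕ} (K : Nd d)
    (f : (Fin n → Nd d) → M) (h : ∀ L, f L ≠ 0 → ∀ i, L i ≤ K) :
    ∑ᶠ L, f L = ∑ L ∈ TBox n K, f L :=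
  finsum_eq_finset_sum_of_support_subset _ (fun L hL => Finset.mem_coe.2 (mem_TBox.2 (h L hL)))

lemma binrow (x a : ℕ) : ∑ t ∈ Finset.Iic a, Nat.choose a t * x ^ (a - t) = (x + 1) ^ a := by
  have h : Finset.Iic a = Finset.range (a + 1) := by
    ext t; simp [Nat.lt_succ_iff]
  rw [h, show x + 1 = 1 + x by ring, add_pow]
  apply Finset.sum_congr rfl
  intro t _
  simp [mul_comm]

/-- Closed form for the full sum of multinomial coefficients. -/
lemma finsum_ndMnom (n : ℕ) (k : Nd d) :
    ∑ᶠ L : Fin n → Nd d, ndMnom k L = ∏ c, (n + 1) ^ (k c) := by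
  induction n generalizing k with
  | zero =>
    rw [finsum_unique]
    simp [ndMnom]
  | succ n ih =>
    rw [finsum_eq_sum_TBox k _ (fun L hL i => ndMnom_le hL i)]
    rw [Finset.sum_nbij' (fun L => ((L 0, Fin.tail L) : Nd d × (Fin n → Nd d)))
      (fun p => Fin.cons p.1 p.2)
      (t := Box k ×ˢ TBox n k)
      (g := fun p => ndMnom k (Fin.cons p.1 p.2))
      (by
        intro L hL
        rw [Finset.mem_product]
        exact ⟨mem_Box.2 (mem_TBox.1 hL 0), mem_TBox.2 (fun i => mem_TBox.1 hL i.succ)⟩)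
      (by
        intro p hp
        rw [Finset.mem_product] at hp
        refine mem_TBox.2 (fun i => ?_)
        refine Fin.cases ?_ ?_ i
        · simpa using mem_Box.1 hp.1
        · intro j; simpa using mem_TBox.1 hp.2 j)
      (fun L _ => Fin.cons_self_tail L)
      (fun p _ => by simp)
      (fun L _ => by
        show ndMnom k L = ndMnom k (Fin.cons (L 0) (Fin.tail L))
        rw [Fin.cons_self_tail])]
    rw [Finset.sum_product]
    have hinner : ∀ l0 : Nd d,
        ∑ p2 ∈ TBox n k, ndMnom k (Fin.cons l0 p2)
          = binom k l0 * ∏ c, (n + 1) ^ ((k - l0) c) := by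
      intro l0
      have hc : ∀ p2 ∈ TBox n k, ndMnom k (Fin.cons l0 p2) = binom k l0 * ndMnom (k - l0) p2 :=
        fun p2 _ => ndMnom_cons k l0 p2
      rw [Finset.sum_congr rfl hc, ← Finset.mul_sum]
      congr 1
      rw [← finsum_eq_sum_TBox k _ (fun L hL i => (ndMnom_le hL i).trans tsub_le_self), ih]
    rw [Finset.sum_congr rfl (fun l0 _ => hinner l0)]
    have hfact : ∀ l0 : Nd d, binom k l0 * ∏ c, (n + 1) ^ ((k - l0) c)
        = ∏ c, Nat.choose (k c) (l0 c) * (n + 1) ^ (k c - l0 c) := by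
      intro l0
      rw [binom, ← Finset.prod_mul_distrib]
      rfl
    rw [Finset.sum_congr rfl (fun l0 _ => hfact l0), Box,
      ← Finset.prod_univ_sum (fun c => Finset.Iic (k c))
        (fun c t => Nat.choose (k c) t * (n + 1) ^ (k c - t))]
    apply Finset.prod_congr rfl
    intro c _
    rw [binrow]

lemma sum_TBox_ndMnom {n : ℕ} {k K : Nd d} (hkK : k ≤ K) :
    ∑ L ∈ TBox n K, ndMnom k L = ∏ c, (n + 1) ^ (k c) := by
  rw [← finsum_eq_sum_TBox K _ (fun L hL i => (ndMnom_le hL i).trans hkK), finsum_ndMnom]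

lemma sub_add_le (nv s k : Nd d) : nv - s + k ≤ nv + k := fun c => by
  simp only [Pi.add_apply, Pi.sub_apply]
  omega

lemma keyA (n m : ℕ) (nv k : Nd d) :
    (∑ ℓ ∈ TBox n (nv + k), ∑ ℓb ∈ TBox m nv,
      ndMnom nv ℓb * ndMnom (nv - (∑ i, ℓb i) + k) ℓ)
    = ∑ ℓ ∈ TBox n k, ∑ r ∈ TBox n nv, ∑ ℓb ∈ TBox m nv,
      ndMnom nv (Fin.append ℓb r) * ndMnom k ℓ := by
  have h1 : (∑ ℓ ∈ TBox n (nv + k), ∑ ℓb ∈ TBox m nv,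
        ndMnom nv ℓb * ndMnom (nv - (∑ i, ℓb i) + k) ℓ)
      = ∑ ℓb ∈ TBox m nv, ndMnom nv ℓb *
          ((∏ c, (n + 1) ^ ((nv - (∑ i, ℓb i)) c)) * ∏ c, (n + 1) ^ (k c)) := by
    rw [Finset.sum_comm]
    apply Finset.sum_congr rfl
    intro ℓb _
    rw [← Finset.mul_sum, sum_TBox_ndMnom (sub_add_le nv _ k)]
    congr 1
    rw [← Finset.prod_mul_distrib]
    apply Finset.prod_congr rfl
    intro c _
    rw [← pow_add]
    rfl
  have h2 : (∑ ℓ ∈ TBox n k, ∑ r ∈ TBox n nv, ∑ ℓb ∈ TBox m nv,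
        ndMnom nv (Fin.append ℓb r) * ndMnom k ℓ)
      = ∑ ℓb ∈ TBox m nv, ndMnom nv ℓb *
          ((∏ c, (n + 1) ^ ((nv - (∑ i, ℓb i)) c)) * ∏ c, (n + 1) ^ (k c)) := by
    simp only [ndMnom_append, ← Finset.sum_mul]
    rw [← Finset.mul_sum, sum_TBox_ndMnom (le_refl k), Finset.sum_comm]
    have hC : ∀ ℓb ∈ TBox m nv,
        (∑ r ∈ TBox n nv, ndMnom nv ℓb * ndMnom (nv - ∑ i, ℓb i) r)
          = ndMnom nv ℓb * ∏ c, (n + 1) ^ ((nv - ∑ i, ℓb i) c) := by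
      intro ℓb _
      rw [← Finset.mul_sum, sum_TBox_ndMnom tsub_le_self]
    rw [Finset.sum_congr rfl hC, Finset.sum_mul]
    apply Finset.sum_congr rfl
    intro ℓb _
    ring
  exact h1.trans h2.symm

lemma keyB (n m : ℕ) (nv k : Nd d) :
    (∑ ℓ ∈ TBox n nv, ∑ ℓb ∈ TBox m (nv + k),
      ndMnom nv ℓ * ndMnom (nv - (∑ i, ℓ i) + k) ℓb)
    = ∑ ℓ ∈ TBox n nv, ∑ ℓb ∈ TBox m k, ∑ rb ∈ TBox m nv,
      ndMnom nv (Fin.append ℓ rb) * ndMnom k ℓb := by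
  apply Finset.sum_congr rfl
  intro ℓ _
  rw [← Finset.mul_sum, sum_TBox_ndMnom (sub_add_le nv _ k)]
  simp only [ndMnom_append, ← Finset.sum_mul]
  have hI : (∑ rb ∈ TBox m nv, ndMnom nv ℓ * ndMnom (nv - ∑ i, ℓ i) rb)
      = ndMnom nv ℓ * ∏ c, (m + 1) ^ ((nv - ∑ i, ℓ i) c) := by
    rw [← Finset.mul_sum, sum_TBox_ndMnom tsub_le_self]
  rw [hI, ← Finset.mul_sum, sum_TBox_ndMnom (le_refl k), mul_assoc]
  congr 1
  rw [← Finset.prod_mul_distrib]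
  apply Finset.prod_congr rfl
  intro c _
  rw [← pow_add]
  rfl

end Aux

theorem deformed_plugging_binomial_symmetry (d nn m : ℕ) (nv k kb : Nd d) :
    ((∑ᶠ ℓ : Fin nn → Nd d, ∑ᶠ ℓb : Fin m → Nd d,
        (ndMnom nv ℓb * ndMnom (nv - (∑ i, ℓb i) + kb) ℓ : ℤ))
      - ∑ᶠ ℓ : Fin nn → Nd d, ∑ᶠ r : Fin nn → Nd d, ∑ᶠ ℓb : Fin m → Nd d,
        (ndMnom nv (Fin.append ℓb r) * ndMnom kb ℓ : ℤ))
    = ((∑ᶠ ℓ : Fin nn → Nd d, ∑ᶠ ℓb : Fin m → Nd d,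
        (ndMnom nv ℓ * ndMnom (nv - (∑ i, ℓ i) + k) ℓb : ℤ))
      - ∑ᶠ ℓ : Fin nn → Nd d, ∑ᶠ ℓb : Fin m → Nd d, ∑ᶠ rb : Fin m → Nd d,
        (ndMnom nv (Fin.append ℓ rb) * ndMnom k ℓb : ℤ))
    ∧ ∀ ℓb : Fin m → Nd d,
        (∑ᶠ ℓ : Fin nn → Nd d, ∑ᶠ r : Fin nn → Nd d,
          ndMnom (nv - ∑ i, ℓb i) r * ndMnom kb ℓ)
        = ∑ᶠ ℓ : Fin nn → Nd d, ndMnom (nv - (∑ i, ℓb i) + kb) ℓ := by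
  constructor
  · -- the pre-Lie symmetry
    have eA1 : (∑ᶠ ℓ : Fin nn → Nd d, ∑ᶠ ℓb : Fin m → Nd d,
          (ndMnom nv ℓb * ndMnom (nv - (∑ i, ℓb i) + kb) ℓ : ℤ))
        = ((∑ ℓ ∈ TBox nn (nv + kb), ∑ ℓb ∈ TBox m nv,
            ndMnom nv ℓb * ndMnom (nv - (∑ i, ℓb i) + kb) ℓ : ℕ) : ℤ) := by
      have hin : ∀ ℓ : Fin nn → Nd d,
          (∑ᶠ ℓb : Fin m → Nd d, (ndMnom nv ℓb * ndMnom (nv - (∑ i, ℓb i) + kb) ℓ : ℤ))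
            = ∑ ℓb ∈ TBox m nv,
              (ndMnom nv ℓb * ndMnom (nv - (∑ i, ℓb i) + kb) ℓ : ℤ) := by
        intro ℓ
        apply finsum_eq_sum_TBox
        intro ℓb h i
        apply ndMnom_le _ i
        have h1 := left_ne_zero_of_mul h
        exact_mod_cast h1
      rw [finsum_congr hin, finsum_eq_sum_TBox (nv + kb) _ (by
        intro ℓ h i
        obtain ⟨ℓb, -, hne⟩ := Finset.exists_ne_zero_of_sum_ne_zero h
        have h2 := right_ne_zero_of_mul hne
        have h3 : ndMnom (nv - (∑ i, ℓb i) + kb) ℓ ≠ 0 := by exact_mod_cast h2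
        exact (ndMnom_le h3 i).trans (sub_add_le nv _ kb))]
      push_cast
      rfl
    have eA2 : (∑ᶠ ℓ : Fin nn → Nd d, ∑ᶠ r : Fin nn → Nd d, ∑ᶠ ℓb : Fin m → Nd d,
          (ndMnom nv (Fin.append ℓb r) * ndMnom kb ℓ : ℤ))
        = ((∑ ℓ ∈ TBox nn kb, ∑ r ∈ TBox nn nv, ∑ ℓb ∈ TBox m nv,
            ndMnom nv (Fin.append ℓb r) * ndMnom kb ℓ : ℕ) : ℤ) := by
      have hin : ∀ (ℓ : Fin nn → Nd d) (r : Fin nn → Nd d),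
          (∑ᶠ ℓb : Fin m → Nd d, (ndMnom nv (Fin.append ℓb r) * ndMnom kb ℓ : ℤ))
            = ∑ ℓb ∈ TBox m nv, (ndMnom nv (Fin.append ℓb r) * ndMnom kb ℓ : ℤ) := by
        intro ℓ r
        apply finsum_eq_sum_TBox
        intro ℓb h i
        have h1 : ndMnom nv (Fin.append ℓb r) ≠ 0 := by
          have := left_ne_zero_of_mul h
          exact_mod_cast this
        have h2 := ndMnom_le h1 (Fin.castAdd nn i)
        rwa [Fin.append_left] at h2
      have hmid : ∀ ℓ : Fin nn → Nd d,
          (∑ᶠ r : Fin nn → Nd d, ∑ ℓb ∈ TBox m nv,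
            (ndMnom nv (Fin.append ℓb r) * ndMnom kb ℓ : ℤ))
            = ∑ r ∈ TBox nn nv, ∑ ℓb ∈ TBox m nv,
              (ndMnom nv (Fin.append ℓb r) * ndMnom kb ℓ : ℤ) := by
        intro ℓ
        apply finsum_eq_sum_TBox
        intro r h i
        obtain ⟨ℓb, -, hne⟩ := Finset.exists_ne_zero_of_sum_ne_zero h
        have h1 : ndMnom nv (Fin.append ℓb r) ≠ 0 := by
          have := left_ne_zero_of_mul hne
          exact_mod_cast this
        have h2 := ndMnom_le h1 (Fin.natAdd m i)
        rwa [Fin.append_right] at h2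
      rw [finsum_congr (fun ℓ => finsum_congr (fun r => hin ℓ r)),
        finsum_congr hmid, finsum_eq_sum_TBox kb _ (by
          intro ℓ h i
          obtain ⟨r, -, h4⟩ := Finset.exists_ne_zero_of_sum_ne_zero h
          obtain ⟨ℓb, -, hne⟩ := Finset.exists_ne_zero_of_sum_ne_zero h4
          have h2 := right_ne_zero_of_mul hne
          have h3 : ndMnom kb ℓ ≠ 0 := by exact_mod_cast h2
          exact ndMnom_le h3 i)]
      push_cast
      rfl
    have eB1 : (∑ᶠ ℓ : Fin nn → Nd d, ∑ᶠ ℓb : Fin m → Nd d,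
          (ndMnom nv ℓ * ndMnom (nv - (∑ i, ℓ i) + k) ℓb : ℤ))
        = ((∑ ℓ ∈ TBox nn nv, ∑ ℓb ∈ TBox m (nv + k),
            ndMnom nv ℓ * ndMnom (nv - (∑ i, ℓ i) + k) ℓb : ℕ) : ℤ) := by
      have hin : ∀ ℓ : Fin nn → Nd d,
          (∑ᶠ ℓb : Fin m → Nd d, (ndMnom nv ℓ * ndMnom (nv - (∑ i, ℓ i) + k) ℓb : ℤ))
            = ∑ ℓb ∈ TBox m (nv + k),
              (ndMnom nv ℓ * ndMnom (nv - (∑ i, ℓ i) + k) ℓb : ℤ) := by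
        intro ℓ
        apply finsum_eq_sum_TBox
        intro ℓb h i
        have h2 := right_ne_zero_of_mul h
        have h3 : ndMnom (nv - (∑ i, ℓ i) + k) ℓb ≠ 0 := by exact_mod_cast h2
        exact (ndMnom_le h3 i).trans (sub_add_le nv _ k)
      rw [finsum_congr hin, finsum_eq_sum_TBox nv _ (by
        intro ℓ h i
        obtain ⟨ℓb, -, hne⟩ := Finset.exists_ne_zero_of_sum_ne_zero h
        have h1 := left_ne_zero_of_mul hne
        have h3 : ndMnom nv ℓ ≠ 0 := by exact_mod_cast h1
        exact ndMnom_le h3 i)]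
      push_cast
      rfl
    have eB2 : (∑ᶠ ℓ : Fin nn → Nd d, ∑ᶠ ℓb : Fin m → Nd d, ∑ᶠ rb : Fin m → Nd d,
          (ndMnom nv (Fin.append ℓ rb) * ndMnom k ℓb : ℤ))
        = ((∑ ℓ ∈ TBox nn nv, ∑ ℓb ∈ TBox m k, ∑ rb ∈ TBox m nv,
            ndMnom nv (Fin.append ℓ rb) * ndMnom k ℓb : ℕ) : ℤ) := by
      have hin : ∀ (ℓ : Fin nn → Nd d) (ℓb : Fin m → Nd d),
          (∑ᶠ rb : Fin m → Nd d, (ndMnom nv (Fin.append ℓ rb) * ndMnom k ℓb : ℤ))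
            = ∑ rb ∈ TBox m nv, (ndMnom nv (Fin.append ℓ rb) * ndMnom k ℓb : ℤ) := by
        intro ℓ ℓb
        apply finsum_eq_sum_TBox
        intro rb h i
        have h1 : ndMnom nv (Fin.append ℓ rb) ≠ 0 := by
          have := left_ne_zero_of_mul h
          exact_mod_cast this
        have h2 := ndMnom_le h1 (Fin.natAdd nn i)
        rwa [Fin.append_right] at h2
      have hmid : ∀ ℓ : Fin nn → Nd d,
          (∑ᶠ ℓb : Fin m → Nd d, ∑ rb ∈ TBox m nv,
            (ndMnom nv (Fin.append ℓ rb) * ndMnom k ℓb : ℤ))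
            = ∑ ℓb ∈ TBox m k, ∑ rb ∈ TBox m nv,
              (ndMnom nv (Fin.append ℓ rb) * ndMnom k ℓb : ℤ) := by
        intro ℓ
        apply finsum_eq_sum_TBox
        intro ℓb h i
        obtain ⟨rb, -, hne⟩ := Finset.exists_ne_zero_of_sum_ne_zero h
        have h2 := right_ne_zero_of_mul hne
        have h3 : ndMnom k ℓb ≠ 0 := by exact_mod_cast h2
        exact ndMnom_le h3 i
      rw [finsum_congr (fun ℓ => finsum_congr (fun ℓb => hin ℓ ℓb)),
        finsum_congr hmid, finsum_eq_sum_TBox nv _ (by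
          intro ℓ h i
          obtain ⟨ℓb, -, h4⟩ := Finset.exists_ne_zero_of_sum_ne_zero h
          obtain ⟨rb, -, hne⟩ := Finset.exists_ne_zero_of_sum_ne_zero h4
          have h1 : ndMnom nv (Fin.append ℓ rb) ≠ 0 := by
            have := left_ne_zero_of_mul hne
            exact_mod_cast this
          have h2 := ndMnom_le h1 (Fin.castAdd m i)
          rwa [Fin.append_left] at h2)]
      push_cast
      rfl
    rw [eA1, eA2, eB1, eB2, keyA nn m nv kb, keyB nn m nv k]
    simp
  · -- Chu–Vandermonde
    intro ℓb
    have hfinr : (Function.support fun r : Fin nn → Nd d =>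
        ndMnom (nv - ∑ i, ℓb i) r).Finite :=
      Set.Finite.subset (TBox nn (nv - ∑ i, ℓb i)).finite_toSet
        (fun r hr => Finset.mem_coe.2 (mem_TBox.2 (fun i => ndMnom_le hr i)))
    have hfinl : (Function.support fun ℓ : Fin nn → Nd d => ndMnom kb ℓ).Finite :=
      Set.Finite.subset (TBox nn kb).finite_toSet
        (fun ℓ hl => Finset.mem_coe.2 (mem_TBox.2 (fun i => ndMnom_le hl i)))
    calc (∑ᶠ ℓ : Fin nn → Nd d, ∑ᶠ r : Fin nn → Nd d,
            ndMnom (nv - ∑ i, ℓb i) r * ndMnom kb ℓ)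
        = ∑ᶠ ℓ : Fin nn → Nd d,
            (∑ᶠ r : Fin nn → Nd d, ndMnom (nv - ∑ i, ℓb i) r) * ndMnom kb ℓ :=
          finsum_congr (fun ℓ => (finsum_mul _ _).symm)
      _ = (∏ c, (nn + 1) ^ ((nv - ∑ i, ℓb i) c)) * ∑ᶠ ℓ : Fin nn → Nd d, ndMnom kb ℓ := by
          rw [finsum_ndMnom, mul_finsum _ _]
      _ = ∏ c, (nn + 1) ^ ((nv - (∑ i, ℓb i) + kb) c) := by
          rw [finsum_ndMnom, ← Finset.prod_mul_distrib]
          apply Finset.prod_congr rfl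
          intro c _
          rw [← pow_add]
          rfl
      _ = ∑ᶠ ℓ : Fin nn → Nd d, ndMnom (nv - (∑ i, ℓb i) + kb) ℓ :=
          (finsum_ndMnom _ _).symm
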